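/- For every integer n ≥ 2, e_2B(n) ≡ 1 (mod 2), i.e. the sum of e_2(λ) over all binary partitions λ of n is odd. -/

import Mathlib

open Finset
open scoped Classical

/-- The finset of binary partitions of `n` (all parts are powers of `2`). -/
noncomputable def binaryPartitions (n : ℕ) : Finset (Nat.Partition n) :=
  Finset.univ.filter fun π => ∀ i ∈ π.parts, ∃ k : ℕ, i = 2 ^ k

/-- `B(n)`, the number of binary partitions of `n`. -/
noncomputable def Bbin (n : ℕ) : ℕ := (binaryPartitions n).card

/-- `e_j B(n)`, the sum of the `j`-th elementary symmetric polynomial evaluated at the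
parts over all binary partitions of `n`. -/
noncomputable def ejB (j n : ℕ) : ℕ := ∑ π ∈ binaryPartitions n, π.parts.esymm j

/-- `σ_{j,bin}(n) = Σ_{d ≥ 0, 2^d ∣ n} 2^{d·j}`. -/
def sigmaBin (j n : ℕ) : ℕ :=
  ∑ d ∈ (Finset.range (n + 1)).filter (fun d => 2 ^ d ∣ n), 2 ^ (d * j)

namespace E2Baux

lemma mem_binaryPartitions {n : ℕ} {π : Nat.Partition n} :
    π ∈ binaryPartitions n ↔ ∀ i ∈ π.parts, ∃ k : ℕ, i = 2 ^ k := by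
  simp [binaryPartitions]

/-! ### The `esymm` computation mod 2 -/

lemma esymm_two_cons (a : ℕ) (s : Multiset ℕ) :
    (a ::ₘ s).esymm 2 = a * s.sum + s.esymm 2 := by
  rw [Multiset.esymm, Multiset.esymm, show (2:ℕ) = 1 + 1 from rfl,
    Multiset.powersetCard_cons, Multiset.map_add, Multiset.sum_add,
    Multiset.map_map, Multiset.powersetCard_one, Multiset.map_map]
  simp only [Function.comp, Multiset.prod_cons, Multiset.prod_singleton]
  rw [add_comm]
  congr 1
  simpa using Multiset.sum_map_mul_left (s := s) (a := a) (f := id)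

lemma sq_sum_eq (s : Multiset ℕ) :
    s.sum ^ 2 = 2 * s.esymm 2 + (s.map (· ^ 2)).sum := by
  induction s using Multiset.induction_on with
  | empty => simp [Multiset.esymm, Multiset.powersetCard_zero_right 1]
  | cons a s ih =>
    rw [Multiset.sum_cons, Multiset.map_cons, Multiset.sum_cons, esymm_two_cons, add_sq, ih]
    ring

lemma sq_map_sum_modeq (s : Multiset ℕ) (h : ∀ i ∈ s, ∃ k : ℕ, i = 2 ^ k) :
    (s.map (· ^ 2)).sum ≡ s.count 1 [MOD 4] := by
  induction s using Multiset.induction_on with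
  | empty =>
    simp only [Multiset.map_zero, Multiset.sum_zero, Multiset.count_zero]
    rfl
  | cons a s ih =>
    have ih' := ih fun i hi => h i (Multiset.mem_cons_of_mem hi)
    obtain ⟨k, rfl⟩ := h a (Multiset.mem_cons_self a s)
    rw [Multiset.map_cons, Multiset.sum_cons, Multiset.count_cons]
    cases k with
    | zero =>
      simp only [pow_zero, one_pow, if_pos rfl]
      calc 1 + (Multiset.map (· ^ 2) s).sum ≡ 1 + s.count 1 [MOD 4] :=
            Nat.ModEq.add_left 1 ih'
        _ = s.count 1 + 1 := by omega
    | succ k =>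
      have h2 : (2 : ℕ) ^ (k + 1) ≠ 1 := by
        have : (2:ℕ) ^ 1 ≤ 2 ^ (k+1) := Nat.pow_le_pow_right (by norm_num) (by omega)
        omega
      rw [if_neg (Ne.symm h2), add_zero]
      have hsq : ((2:ℕ) ^ (k + 1)) ^ 2 = 4 * (4 ^ k) := by
        rw [← pow_mul]
        have h4 : (4:ℕ) = 2 ^ 2 := by norm_num
        rw [h4, ← pow_succ', ← pow_mul]
        congr 1
        omega
      calc ((2:ℕ) ^ (k + 1)) ^ 2 + (Multiset.map (· ^ 2) s).sum
          ≡ 4 * 4 ^ k + s.count 1 [MOD 4] := by rw [hsq]; exact Nat.ModEq.add_left _ ih'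
        _ ≡ 0 + s.count 1 [MOD 4] :=
            Nat.ModEq.add_right _ ((Nat.modEq_zero_iff_dvd).2 ⟨4 ^ k, rfl⟩)
        _ = s.count 1 := by omega

lemma two_mul_choose_two (m : ℕ) : 2 * m.choose 2 = m * (m - 1) := by
  cases m with
  | zero => simp
  | succ m =>
    rw [Nat.choose_two_right]
    have hdvd : 2 ∣ (m + 1) * m := by
      rw [mul_comm]
      exact (Nat.even_mul_succ_self m).two_dvd
    rw [Nat.succ_sub_one, Nat.mul_div_cancel' hdvd]

lemma esymm_two_modeq (s : Multiset ℕ) (h : ∀ i ∈ s, ∃ k : ℕ, i = 2 ^ k) :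
    s.esymm 2 ≡ (s.count 1).choose 2 [MOD 2] := by
  set m := s.count 1 with hm
  have hsplit : s.sum = m + (s.filter (fun x => ¬ x = 1)).sum := by
    conv_lhs => rw [← Multiset.filter_add_not (fun x => x = 1) s]
    rw [Multiset.sum_add, Multiset.filter_eq', Multiset.sum_replicate, smul_eq_mul, mul_one]
  have heven : 2 ∣ (s.filter (fun x => ¬ x = 1)).sum := by
    apply Multiset.dvd_sum
    intro x hx
    rw [Multiset.mem_filter] at hx
    obtain ⟨k, rfl⟩ := h x hx.1
    cases k with
    | zero => exact absurd rfl hx.2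
    | succ k => exact ⟨2 ^ k, by rw [pow_succ']⟩
  obtain ⟨t, ht⟩ := heven
  have hsum : s.sum = m + 2 * t := by rw [hsplit, ht]
  have key : 2 * s.esymm 2 + m ≡ m + 2 * m.choose 2 [MOD 4] := by
    have h1 : 2 * s.esymm 2 + (s.map (· ^ 2)).sum = (m + 2 * t) ^ 2 := by
      rw [← hsum, ← sq_sum_eq]
    have h2 : 2 * s.esymm 2 + m ≡ (m + 2 * t) ^ 2 [MOD 4] := by
      calc 2 * s.esymm 2 + m ≡ 2 * s.esymm 2 + (s.map (· ^ 2)).sum [MOD 4] :=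
            Nat.ModEq.add_left _ (sq_map_sum_modeq s h).symm
        _ = (m + 2 * t) ^ 2 := h1
    have h3 : (m + 2 * t) ^ 2 = m ^ 2 + 4 * (m * t + t ^ 2) := by ring
    have h4 : m ^ 2 = m + 2 * m.choose 2 := by
      rw [two_mul_choose_two]
      cases m with
      | zero => simp
      | succ m => rw [Nat.succ_sub_one]; ring
    calc 2 * s.esymm 2 + m ≡ (m + 2 * t) ^ 2 [MOD 4] := h2
      _ = m ^ 2 + 4 * (m * t + t ^ 2) := h3
      _ ≡ m ^ 2 + 0 [MOD 4] :=
          Nat.ModEq.add_left _ ((Nat.modEq_zero_iff_dvd).2 ⟨_, rfl⟩)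
      _ = m + 2 * m.choose 2 := by rw [add_zero, h4]
  have key2 : 2 * s.esymm 2 ≡ 2 * m.choose 2 [MOD 4] := by
    have hmk : m + 2 * s.esymm 2 ≡ m + 2 * m.choose 2 [MOD 4] := by
      calc m + 2 * s.esymm 2 = 2 * s.esymm 2 + m := by ring
        _ ≡ m + 2 * m.choose 2 [MOD 4] := key
    exact Nat.ModEq.add_left_cancel' m hmk
  have hfin := Nat.ModEq.cancel_left_div_gcd (m := 4) (c := 2) (by norm_num) key2
  simpa using hfin

/-! ### The bijection lemma -/

/-- The halved multiset of non-1 parts. -/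
def halved (s : Multiset ℕ) : Multiset ℕ := (s.filter (fun x => ¬ x = 1)).map (fun x => x / 2)

lemma double_halved {n : ℕ} (π : Nat.Partition n) (hπ : π ∈ binaryPartitions n) :
    Multiset.map (fun i => 2 * (i / 2)) (π.parts.filter (fun x => ¬ x = 1))
      = π.parts.filter (fun x => ¬ x = 1) := by
  have hb := mem_binaryPartitions.1 hπ
  have hcongr : Multiset.map (fun i => 2 * (i / 2)) (π.parts.filter (fun x => ¬ x = 1))
      = Multiset.map (fun x => x) (π.parts.filter (fun x => ¬ x = 1)) := by
    apply Multiset.map_congr rfl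
    intro x hx
    rw [Multiset.mem_filter] at hx
    obtain ⟨k, rfl⟩ := hb x hx.1
    cases k with
    | zero => exact absurd rfl hx.2
    | succ k =>
      rw [pow_succ']
      omega
  rw [hcongr, Multiset.map_id']

lemma halved_sum {n : ℕ} (π : Nat.Partition n) (hπ : π ∈ binaryPartitions n) :
    n = π.parts.count 1 + 2 * (halved π.parts).sum := by
  have h2 : 2 * (halved π.parts).sum = (π.parts.filter (fun x => ¬ x = 1)).sum := by
    rw [halved, ← Multiset.sum_map_mul_left]
    exact congrArg Multiset.sum (double_halved π hπ)
  have h4 : π.parts.count 1 + (π.parts.filter (fun x => ¬ x = 1)).sum = π.parts.sum := by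
    conv_rhs => rw [← Multiset.filter_add_not (fun x => x = 1) π.parts]
    rw [Multiset.sum_add, Multiset.filter_eq', Multiset.sum_replicate, smul_eq_mul, mul_one]
  have h5 := π.parts_sum
  omega

lemma sigma_ext' (p q : Σ m, Nat.Partition m) (h : p.2.parts = q.2.parts) : p = q := by
  obtain ⟨k, σ⟩ := p
  obtain ⟨k', σ'⟩ := q
  have hk : k = k' := by
    rw [← σ.parts_sum, ← σ'.parts_sum]
    exact congrArg _ h
  subst hk
  exact congrArg _ (Nat.Partition.ext h)

/-- Forward map: strip the 1s and halve the remaining parts. -/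
def fwd {n : ℕ} (π : Nat.Partition n) : Σ k, Nat.Partition k :=
  ⟨(halved π.parts).sum,
    { parts := halved π.parts
      parts_pos := by
        intro i hi
        rw [halved, Multiset.mem_map] at hi
        obtain ⟨x, hx, rfl⟩ := hi
        rw [Multiset.mem_filter] at hx
        have hp := π.parts_pos hx.1
        have hne := hx.2
        omega
      parts_sum := rfl }⟩

/-- Backward map: `n - 2k` parts equal to 1 plus the doubled parts of `σ`. -/
def bwd (n : ℕ) (k : ℕ) (σ : Nat.Partition k) (h : 2 * k ≤ n) :
    Nat.Partition n where
  parts := Multiset.replicate (n - 2 * k) 1 + σ.parts.map (fun x => 2 * x)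
  parts_pos := by
    intro i hi
    rw [Multiset.mem_add] at hi
    rcases hi with hi | hi
    · rw [Multiset.eq_of_mem_replicate hi]; norm_num
    · rw [Multiset.mem_map] at hi
      obtain ⟨x, hx, rfl⟩ := hi
      have := σ.parts_pos hx
      omega
  parts_sum := by
    rw [Multiset.sum_add, Multiset.sum_replicate, Multiset.sum_map_mul_left,
      Multiset.map_id', σ.parts_sum, smul_eq_mul, mul_one]
    omega

lemma sum_binary_count_one {n : ℕ} {M : Type*} [AddCommMonoid M] (f : ℕ → M) :
    ∑ π ∈ binaryPartitions n, f (π.parts.count 1)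
      = ∑ k ∈ Finset.range (n / 2 + 1), Bbin k • f (n - 2 * k) := by
  have hRHS : ∀ k : ℕ, Bbin k • f (n - 2 * k)
      = ∑ _σ ∈ binaryPartitions k, f (n - 2 * k) := fun k => (Finset.sum_const _).symm
  simp_rw [hRHS]
  rw [Finset.sum_sigma']
  refine (Finset.sum_bij' (fun π _ => fwd π)
    (fun p hp => bwd n p.1 p.2 (by
      rw [Finset.mem_sigma, Finset.mem_range] at hp
      omega)) ?_ ?_ ?_ ?_ ?_)
  · -- fwd lands in the sigma finset
    intro π hπ
    rw [Finset.mem_sigma, Finset.mem_range]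
    constructor
    · have := halved_sum π hπ
      simp only [fwd]
      omega
    · rw [mem_binaryPartitions]
      intro i hi
      simp only [fwd, halved] at hi
      rw [Multiset.mem_map] at hi
      obtain ⟨x, hx, rfl⟩ := hi
      rw [Multiset.mem_filter] at hx
      obtain ⟨k, rfl⟩ := (mem_binaryPartitions.1 hπ) x hx.1
      cases k with
      | zero => exact absurd rfl hx.2
      | succ k =>
        refine ⟨k, ?_⟩
        rw [pow_succ']
        omega
  · -- bwd lands in binaryPartitions n
    intro p hp
    rw [mem_binaryPartitions]
    intro i hi
    simp only [bwd] at hi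
    rw [Multiset.mem_add] at hi
    rcases hi with hi | hi
    · exact ⟨0, by rw [Multiset.eq_of_mem_replicate hi]; norm_num⟩
    · rw [Multiset.mem_map] at hi
      obtain ⟨x, hx, rfl⟩ := hi
      rw [Finset.mem_sigma] at hp
      obtain ⟨k, rfl⟩ := (mem_binaryPartitions.1 hp.2) x hx
      exact ⟨k + 1, by rw [pow_succ']⟩
  · -- left inverse : bwd (fwd π) = π
    intro π hπ
    apply Nat.Partition.ext
    simp only [bwd, fwd]
    have hcount : n - 2 * (halved π.parts).sum = π.parts.count 1 := by
      have := halved_sum π hπ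
      omega
    rw [hcount, halved, Multiset.map_map]
    have hmap : Multiset.map ((fun x => 2 * x) ∘ fun x => x / 2)
        (π.parts.filter (fun x => ¬ x = 1)) = π.parts.filter (fun x => ¬ x = 1) := by
      have h := double_halved π hπ
      calc Multiset.map ((fun x => 2 * x) ∘ fun x => x / 2) (π.parts.filter (fun x => ¬ x = 1))
          = Multiset.map (fun i => 2 * (i / 2)) (π.parts.filter (fun x => ¬ x = 1)) := rfl
        _ = π.parts.filter (fun x => ¬ x = 1) := h
    rw [hmap, ← Multiset.filter_eq']
    exact Multiset.filter_add_not _ _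
  · -- right inverse : fwd (bwd p) = p
    intro p hp
    apply sigma_ext'
    obtain ⟨k, σ⟩ := p
    simp only [fwd, bwd, halved]
    have hfilter : (Multiset.replicate (n - 2 * k) 1
        + σ.parts.map (fun x => 2 * x)).filter (fun x => ¬ x = 1)
        = σ.parts.map (fun x => 2 * x) := by
      rw [Multiset.filter_add]
      have h1 : (Multiset.replicate (n - 2 * k) 1).filter (fun x => ¬ x = 1) = 0 := by
        rw [Multiset.filter_eq_nil]
        intro a ha
        rw [Multiset.eq_of_mem_replicate ha]
        simp
      have h2 : (σ.parts.map (fun x => 2 * x)).filter (fun x => ¬ x = 1)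
          = σ.parts.map (fun x => 2 * x) := by
        rw [Multiset.filter_eq_self]
        intro a ha
        rw [Multiset.mem_map] at ha
        obtain ⟨x, hx, rfl⟩ := ha
        omega
      rw [h1, h2, zero_add]
    rw [hfilter, Multiset.map_map]
    calc Multiset.map ((fun x => x / 2) ∘ fun x => 2 * x) σ.parts
        = Multiset.map (fun x => x) σ.parts := by
          apply Multiset.map_congr rfl
          intro x _
          simp only [Function.comp]
          omega
      _ = σ.parts := Multiset.map_id' _
  · -- values agree
    intro π hπ
    have := halved_sum π hπ
    have hcount : π.parts.count 1 = n - 2 * (fwd π).1 := by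
      simp only [fwd]
      omega
    rw [hcount]

/-! ### Parity of `Bbin` -/

lemma Bbin_zero : Bbin 0 = 1 := by
  rw [Bbin, binaryPartitions, Finset.filter_true_of_mem]
  · simp [Finset.card_univ, Fintype.card_unique]
  · intro π _ i hi
    simp at hi

lemma Bbin_one : Bbin 1 = 1 := by
  rw [Bbin, binaryPartitions, Finset.filter_true_of_mem]
  · simp [Finset.card_univ, Fintype.card_unique]
  · intro π _ i hi
    rw [Nat.Partition.partition_one_parts, Multiset.mem_singleton] at hi
    exact ⟨0, by simp [hi]⟩

lemma Bbin_rec (n : ℕ) : Bbin n = ∑ k ∈ Finset.range (n / 2 + 1), Bbin k := by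
  have h := sum_binary_count_one (n := n) (M := ℕ) (fun _ => 1)
  simpa [Bbin] using h

lemma Bbin_even {n : ℕ} (hn : 2 ≤ n) : 2 ∣ Bbin n := by
  induction n using Nat.strong_induction_on with
  | _ n ih =>
    rw [Bbin_rec]
    rw [Finset.range_eq_Ico,
      ← Finset.sum_Ico_consecutive _ (Nat.zero_le 2) (by omega : 2 ≤ n / 2 + 1)]
    apply Nat.dvd_add
    · have h01 : ∑ k ∈ Finset.Ico 0 2, Bbin k = Bbin 0 + Bbin 1 := by
        rw [show Finset.Ico 0 2 = {0, 1} by rfl]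
        simp
      rw [h01, Bbin_zero, Bbin_one]
    · apply Finset.dvd_sum
      intro k hk
      rw [Finset.mem_Ico] at hk
      exact ih k (by omega) hk.1

end E2Baux

theorem e2B_odd (n : ℕ) (hn : 2 ≤ n) : ejB 2 n ≡ 1 [MOD 2] := by
  have h2z : (2 : ZMod 2) = 0 := by decide
  rw [← ZMod.natCast_eq_natCast_iff]
  have step1 : ((ejB 2 n : ℕ) : ZMod 2)
      = ∑ π ∈ binaryPartitions n, (((π.parts.count 1).choose 2 : ℕ) : ZMod 2) := by
    rw [ejB, Nat.cast_sum]
    apply Finset.sum_congr rfl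
    intro π hπ
    have hb := E2Baux.mem_binaryPartitions.1 hπ
    have hmod := E2Baux.esymm_two_modeq π.parts hb
    exact (ZMod.natCast_eq_natCast_iff _ _ _).2 hmod
  rw [step1]
  rw [E2Baux.sum_binary_count_one (n := n) (M := ZMod 2)
    (fun m => ((m.choose 2 : ℕ) : ZMod 2))]
  have hsplit : Finset.range (n / 2 + 1)
      = Finset.Ico 0 2 ∪ Finset.Ico 2 (n / 2 + 1) := by
    rw [Finset.Ico_union_Ico_eq_Ico (by omega) (by omega), Finset.range_eq_Ico]
  rw [hsplit, Finset.sum_union (Finset.disjoint_left.mpr (by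
    intro a ha hb
    rw [Finset.mem_Ico] at ha hb
    omega))]
  have hzero : ∑ k ∈ Finset.Ico 2 (n / 2 + 1),
      Bbin k • (((n - 2 * k).choose 2 : ℕ) : ZMod 2) = 0 := by
    apply Finset.sum_eq_zero
    intro k hk
    rw [Finset.mem_Ico] at hk
    obtain ⟨c, hc⟩ := E2Baux.Bbin_even hk.1
    rw [hc, nsmul_eq_mul]
    push_cast
    rw [h2z]
    ring
  rw [hzero, add_zero]
  have h01 : ∑ k ∈ Finset.Ico 0 2, Bbin k • (((n - 2 * k).choose 2 : ℕ) : ZMod 2)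
      = ((n.choose 2 : ℕ) : ZMod 2) + (((n - 2).choose 2 : ℕ) : ZMod 2) := by
    rw [show Finset.Ico 0 2 = {0, 1} by rfl]
    rw [Finset.sum_insert (by simp), Finset.sum_singleton]
    rw [E2Baux.Bbin_zero, E2Baux.Bbin_one, one_nsmul, one_nsmul]
    norm_num
  rw [h01]
  obtain ⟨m, rfl⟩ : ∃ m, n = m + 2 := ⟨n - 2, by omega⟩
  have hch : (m + 2).choose 2 + m.choose 2 = 2 * (m + m.choose 2) + 1 := by
    have h1 : (m + 2).choose 2 = (m + 1).choose 1 + (m + 1).choose 2 :=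
      Nat.choose_succ_succ _ _
    have h2 : (m + 1).choose 2 = m.choose 1 + m.choose 2 := Nat.choose_succ_succ _ _
    rw [h1, h2]
    simp only [Nat.choose_one_right]
    ring
  have hms : ((m + 2 - 2) : ℕ) = m := by omega
  rw [hms, ← Nat.cast_add, hch]
  push_cast
  rw [h2z]
  ring
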